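/- Let c ∈ ℝ be a constant and let A : (0,∞) × (0,∞) → ℝ be a C² function satisfying t·p·A_{pp} − 2t²·A_{pt} + 2c² = 0 for all p, t > 0. Define G(p,y,t) = A(p,t) + p·(−y²/(4t) + c·y/t). Then G satisfies the G-equation G_{yp}² − G_{yy} G_{pp} − G_{pt} = 0 for all p ∈ (0,∞), y ∈ ℝ, t ∈ (0,∞). -/

import Mathlib

/-- Partial derivative of `f : ℝ³ → ℝ` in direction `v`, as a function. -/
noncomputable def pd (v : ℝ × ℝ × ℝ) (f : ℝ × ℝ × ℝ → ℝ) : ℝ × ℝ × ℝ → ℝ :=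
  fun q => fderiv ℝ f q v

/-- ∂/∂p for functions `G(p,y,t)`. -/
noncomputable def px : (ℝ × ℝ × ℝ → ℝ) → ℝ × ℝ × ℝ → ℝ := pd (1, 0, 0)
/-- ∂/∂y. -/
noncomputable def py : (ℝ × ℝ × ℝ → ℝ) → ℝ × ℝ × ℝ → ℝ := pd (0, 1, 0)
/-- ∂/∂t. -/
noncomputable def pt : (ℝ × ℝ × ℝ → ℝ) → ℝ × ℝ × ℝ → ℝ := pd (0, 0, 1)

/-- Partial derivative of `f : ℝ² → ℝ` in direction `v`, as a function. -/
noncomputable def pd2 (v : ℝ × ℝ) (f : ℝ × ℝ → ℝ) : ℝ × ℝ → ℝ :=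
  fun z => fderiv ℝ f z v

/-- Derivative in the first coordinate (i.e. `p` for `A(p,t)`). -/
noncomputable def p1 : (ℝ × ℝ → ℝ) → ℝ × ℝ → ℝ := pd2 (1, 0)
/-- Derivative in the second coordinate (i.e. `t`). -/
noncomputable def p2 : (ℝ × ℝ → ℝ) → ℝ × ℝ → ℝ := pd2 (0, 1)

open Filter Topology

lemma fderiv_line {E : Type*} [NormedAddCommGroup E] [NormedSpace ℝ E]
    (f : E → ℝ) (q v : E) (hf : DifferentiableAt ℝ f q) :
    fderiv ℝ f q v = deriv (fun s : ℝ => f (q + s • v)) 0 := by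
  have hline : HasDerivAt (fun s : ℝ => q + s • v) v 0 := by
    simpa using ((hasDerivAt_id (0:ℝ)).smul_const v).const_add q
  have h3 : HasFDerivAt f (fderiv ℝ f q) ((fun s : ℝ => q + s • v) 0) := by
    simpa using hf.hasFDerivAt
  have h2 := h3.comp_hasDerivAt 0 hline
  exact (h2.deriv).symm


/-- Verification of the Class C solutions: if `A(p,t)` is C² on `(0,∞) × (0,∞)` and
satisfies `t p A_{pp} - 2t² A_{pt} + 2c² = 0` there, then
`G(p,y,t) = A(p,t) + p(-y²/(4t) + c y/t)` satisfies the G-equation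
`G_{yp}² - G_{yy} G_{pp} - G_{pt} = 0` for all `p > 0`, `y ∈ ℝ`, `t > 0`. -/
theorem stmt16 (c : ℝ) (A : ℝ × ℝ → ℝ)
    (hA : ContDiffOn ℝ 2 A (Set.Ioi (0 : ℝ) ×ˢ Set.Ioi (0 : ℝ)))
    (heq : ∀ p > (0 : ℝ), ∀ t > (0 : ℝ),
      t * p * p1 (p1 A) (p, t) - 2 * t ^ 2 * p2 (p1 A) (p, t) + 2 * c ^ 2 = 0) :
    let G : ℝ × ℝ × ℝ → ℝ := fun r =>
      A (r.1, r.2.2) + r.1 * (-(r.2.1 ^ 2) / (4 * r.2.2) + c * r.2.1 / r.2.2)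
    ∀ p > (0 : ℝ), ∀ y : ℝ, ∀ t > (0 : ℝ),
      (px (py G) (p, y, t)) ^ 2 - py (py G) (p, y, t) * px (px G) (p, y, t)
        - pt (px G) (p, y, t) = 0 := by
  intro G p hp y t ht
  have hG : G = fun r : ℝ × ℝ × ℝ =>
      A (r.1, r.2.2) + r.1 * (-(r.2.1 ^ 2) / (4 * r.2.2) + c * r.2.1 / r.2.2) := rfl
  set U : Set (ℝ × ℝ × ℝ) := {r | 0 < r.1 ∧ 0 < r.2.2} with hU_def
  have hUopen : IsOpen U := by
    have h1 : IsOpen {r : ℝ × ℝ × ℝ | 0 < r.1} := isOpen_lt continuous_const continuous_fst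
    have h2 : IsOpen {r : ℝ × ℝ × ℝ | 0 < r.2.2} :=
      isOpen_lt continuous_const (continuous_snd.comp continuous_snd)
    exact h1.inter h2
  have hU2open : IsOpen (Set.Ioi (0:ℝ) ×ˢ Set.Ioi (0:ℝ)) := isOpen_Ioi.prod isOpen_Ioi
  set L : (ℝ × ℝ × ℝ) →L[ℝ] ℝ × ℝ :=
    (ContinuousLinearMap.fst ℝ ℝ (ℝ × ℝ)).prod
      ((ContinuousLinearMap.snd ℝ ℝ ℝ).comp (ContinuousLinearMap.snd ℝ ℝ (ℝ × ℝ))) with hL_def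
  have hLapp : ∀ r : ℝ × ℝ × ℝ, L r = (r.1, r.2.2) := fun r => rfl
  -- membership
  have hq : ((p, y, t) : ℝ × ℝ × ℝ) ∈ U := ⟨hp, ht⟩
  -- differentiability of A near points of U
  have hAat : ∀ r ∈ U, ContDiffAt ℝ 2 A (r.1, r.2.2) := by
    intro r hr
    exact hA.contDiffAt (hU2open.mem_nhds (Set.mem_prod.2 ⟨hr.1, hr.2⟩))
  have hAL : ∀ r ∈ U, DifferentiableAt ℝ (fun r' : ℝ × ℝ × ℝ => A (r'.1, r'.2.2)) r := by
    intro r hr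
    have h := ((hAat r hr).differentiableAt (by norm_num)).comp r L.differentiableAt
    exact h
  have hALfd : ∀ r ∈ U, ∀ v : ℝ × ℝ × ℝ,
      fderiv ℝ (fun r' : ℝ × ℝ × ℝ => A (r'.1, r'.2.2)) r v = fderiv ℝ A (r.1, r.2.2) (L v) := by
    intro r hr v
    have h := (((hAat r hr).differentiableAt (by norm_num)).hasFDerivAt.comp r L.hasFDerivAt)
    have h2 : HasFDerivAt (fun r' : ℝ × ℝ × ℝ => A (r'.1, r'.2.2))
        ((fderiv ℝ A (r.1, r.2.2)).comp L) r := by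
      exact h
    rw [h2.fderiv]; rfl
  -- differentiability of the explicit part B
  have hBdiff : ∀ r ∈ U, DifferentiableAt ℝ
      (fun r' : ℝ × ℝ × ℝ => r'.1 * (-(r'.2.1 ^ 2) / (4 * r'.2.2) + c * r'.2.1 / r'.2.2)) r := by
    intro r hr
    have ht2' : r.2.2 ≠ 0 := ne_of_gt hr.2
    have ht2 : (4 : ℝ) * r.2.2 ≠ 0 := mul_ne_zero (by norm_num) ht2'
    have hd1 : DifferentiableAt ℝ (fun r' : ℝ × ℝ × ℝ => r'.1) r :=
      (differentiableAt_id.fst)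
    have hdy : DifferentiableAt ℝ (fun r' : ℝ × ℝ × ℝ => r'.2.1) r :=
      (differentiableAt_id.snd.fst)
    have hdt : DifferentiableAt ℝ (fun r' : ℝ × ℝ × ℝ => r'.2.2) r :=
      (differentiableAt_id.snd.snd)
    have hden : DifferentiableAt ℝ (fun r' : ℝ × ℝ × ℝ => 4 * r'.2.2) r := hdt.const_mul 4
    have hterm1 : DifferentiableAt ℝ (fun r' : ℝ × ℝ × ℝ => -(r'.2.1 ^ 2) / (4 * r'.2.2)) r :=
      ((hdy.pow 2).neg).mul (hden.inv ht2)
    have hterm2 : DifferentiableAt ℝ (fun r' : ℝ × ℝ × ℝ => c * r'.2.1 / r'.2.2) r :=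
      (hdy.const_mul c).mul (hdt.inv ht2')
    exact hd1.mul (hterm1.add hterm2)
  -- first derivative in y on U
  have hpyG : ∀ r ∈ U, py G r =
      r.1 * (-(r.2.1) / (2 * r.2.2) + c / r.2.2) := by
    intro r hr
    have ht2' : r.2.2 ≠ 0 := ne_of_gt hr.2
    show fderiv ℝ G r (0, 1, 0) = _
    rw [hG, fderiv_fun_add (hAL r hr) (hBdiff r hr)]
    have h0 : fderiv ℝ (fun r' : ℝ × ℝ × ℝ => A (r'.1, r'.2.2)) r ((0:ℝ), (1:ℝ), (0:ℝ)) = 0 := by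
      rw [hALfd r hr]
      have : L ((0:ℝ), (1:ℝ), (0:ℝ)) = 0 := rfl
      rw [this, map_zero]
    rw [ContinuousLinearMap.add_apply, h0, zero_add,
      fderiv_line _ _ _ (hBdiff r hr)]
    have hfun : (fun s : ℝ =>
        (fun r' : ℝ × ℝ × ℝ => r'.1 * (-(r'.2.1 ^ 2) / (4 * r'.2.2) + c * r'.2.1 / r'.2.2))
          (r + s • ((0:ℝ), (1:ℝ), (0:ℝ)))) =
        fun s : ℝ => r.1 * (-((r.2.1 + s) ^ 2) / (4 * r.2.2) + c * (r.2.1 + s) / r.2.2) := by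
      funext s
      simp [Prod.fst_add, Prod.snd_add, smul_eq_mul]
    rw [hfun]
    have hb : HasDerivAt (fun s : ℝ => r.2.1 + s) 1 0 := by
      simpa using (hasDerivAt_id (0:ℝ)).const_add r.2.1
    have h3 := ((((hb.pow 2).neg).div_const (4 * r.2.2)).add
      ((hb.const_mul c).div_const r.2.2)).const_mul r.1
    rw [HasDerivAt.deriv (f := fun s : ℝ => r.1 * (-((r.2.1 + s) ^ 2) / (4 * r.2.2) + c * (r.2.1 + s) / r.2.2)) h3]
    push_cast
    field_simp
    ring
  -- first derivative in p on U
  have hpxG : ∀ r ∈ U, px G r =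
      fderiv ℝ A (r.1, r.2.2) ((1:ℝ), (0:ℝ)) + (-(r.2.1 ^ 2) / (4 * r.2.2) + c * r.2.1 / r.2.2) := by
    intro r hr
    show fderiv ℝ G r (1, 0, 0) = _
    rw [hG, fderiv_fun_add (hAL r hr) (hBdiff r hr)]
    rw [ContinuousLinearMap.add_apply, hALfd r hr, fderiv_line _ _ _ (hBdiff r hr)]
    have hfun : (fun s : ℝ =>
        (fun r' : ℝ × ℝ × ℝ => r'.1 * (-(r'.2.1 ^ 2) / (4 * r'.2.2) + c * r'.2.1 / r'.2.2))
          (r + s • ((1:ℝ), (0:ℝ), (0:ℝ)))) =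
        fun s : ℝ => (r.1 + s) * (-(r.2.1 ^ 2) / (4 * r.2.2) + c * r.2.1 / r.2.2) := by
      funext s
      simp [Prod.fst_add, Prod.snd_add, smul_eq_mul]
    rw [hfun]
    have hb : HasDerivAt (fun s : ℝ => r.1 + s) 1 0 := by
      simpa using (hasDerivAt_id (0:ℝ)).const_add r.1
    have h3 := hb.mul_const (-(r.2.1 ^ 2) / (4 * r.2.2) + c * r.2.1 / r.2.2)
    rw [h3.deriv]
    have : L ((1:ℝ), (0:ℝ), (0:ℝ)) = ((1:ℝ), (0:ℝ)) := rfl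
    rw [this]
    simp [p1, pd2]
  -- eventual equalities at the point
  have ht' : t ≠ 0 := ne_of_gt ht
  have hmem : U ∈ 𝓝 ((p, y, t) : ℝ × ℝ × ℝ) := hUopen.mem_nhds hq
  have hEqy : py G =ᶠ[𝓝 ((p, y, t) : ℝ × ℝ × ℝ)]
      (fun r : ℝ × ℝ × ℝ => r.1 * (-(r.2.1) / (2 * r.2.2) + c / r.2.2)) :=
    Filter.eventuallyEq_of_mem hmem hpyG
  have hEqx : px G =ᶠ[𝓝 ((p, y, t) : ℝ × ℝ × ℝ)]
      (fun r : ℝ × ℝ × ℝ => fderiv ℝ A (r.1, r.2.2) ((1:ℝ), (0:ℝ))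
        + (-(r.2.1 ^ 2) / (4 * r.2.2) + c * r.2.1 / r.2.2)) :=
    Filter.eventuallyEq_of_mem hmem hpxG
  -- differentiability at the point
  have hdyq : DifferentiableAt ℝ (fun r' : ℝ × ℝ × ℝ => r'.2.1) ((p, y, t) : ℝ × ℝ × ℝ) :=
    differentiableAt_id.snd.fst
  have hdtq : DifferentiableAt ℝ (fun r' : ℝ × ℝ × ℝ => r'.2.2) ((p, y, t) : ℝ × ℝ × ℝ) :=
    differentiableAt_id.snd.snd
  have hd1q : DifferentiableAt ℝ (fun r' : ℝ × ℝ × ℝ => r'.1) ((p, y, t) : ℝ × ℝ × ℝ) :=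
    differentiableAt_id.fst
  have h2t : (2 : ℝ) * t ≠ 0 := mul_ne_zero two_ne_zero ht'
  have h4t : (4 : ℝ) * t ≠ 0 := mul_ne_zero (by norm_num) ht'
  have hF2diff : DifferentiableAt ℝ
      (fun r : ℝ × ℝ × ℝ => r.1 * (-(r.2.1) / (2 * r.2.2) + c / r.2.2)) ((p, y, t) : ℝ × ℝ × ℝ) := by
    exact hd1q.mul (((hdyq.neg).mul ((hdtq.const_mul 2).inv (by exact h2t))).add
      ((differentiableAt_const c).mul (hdtq.inv (by exact ht'))))
  have hfdy : fderiv ℝ (py G) ((p, y, t) : ℝ × ℝ × ℝ) =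
      fderiv ℝ (fun r : ℝ × ℝ × ℝ => r.1 * (-(r.2.1) / (2 * r.2.2) + c / r.2.2))
        ((p, y, t) : ℝ × ℝ × ℝ) := hEqy.fderiv_eq
  -- G_{yp}
  have hpxy : px (py G) (p, y, t) = -(y) / (2 * t) + c / t := by
    show fderiv ℝ (py G) ((p, y, t) : ℝ × ℝ × ℝ) (1, 0, 0) = _
    rw [hfdy, fderiv_line _ _ _ hF2diff]
    have hfun : (fun s : ℝ =>
        (fun r : ℝ × ℝ × ℝ => r.1 * (-(r.2.1) / (2 * r.2.2) + c / r.2.2))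
          (((p, y, t) : ℝ × ℝ × ℝ) + s • ((1:ℝ), (0:ℝ), (0:ℝ)))) =
        fun s : ℝ => (p + s) * (-(y) / (2 * t) + c / t) := by
      funext s
      simp [Prod.mk_add_mk, Prod.smul_mk, smul_eq_mul]
    rw [hfun]
    have hb : HasDerivAt (fun s : ℝ => p + s) 1 0 := by
      simpa using (hasDerivAt_id (0:ℝ)).const_add p
    rw [(hb.mul_const (-(y) / (2 * t) + c / t)).deriv]
    ring
  -- G_{yy}
  have hpyy : py (py G) (p, y, t) = -(p) / (2 * t) := by
    show fderiv ℝ (py G) ((p, y, t) : ℝ × ℝ × ℝ) (0, 1, 0) = _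
    rw [hfdy, fderiv_line _ _ _ hF2diff]
    have hfun : (fun s : ℝ =>
        (fun r : ℝ × ℝ × ℝ => r.1 * (-(r.2.1) / (2 * r.2.2) + c / r.2.2))
          (((p, y, t) : ℝ × ℝ × ℝ) + s • ((0:ℝ), (1:ℝ), (0:ℝ)))) =
        fun s : ℝ => p * (-(y + s) / (2 * t) + c / t) := by
      funext s
      simp [Prod.mk_add_mk, Prod.smul_mk, smul_eq_mul]
    rw [hfun]
    have hb : HasDerivAt (fun s : ℝ => y + s) 1 0 := by
      simpa using (hasDerivAt_id (0:ℝ)).const_add y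
    have h3 := ((hb.neg.div_const (2 * t)).add_const (c / t)).const_mul p
    rw [HasDerivAt.deriv (f := fun s : ℝ => p * (-(y + s) / (2 * t) + c / t)) h3]
    field_simp
  -- second derivatives of A
  have hAq : ContDiffAt ℝ 2 A ((p, t) : ℝ × ℝ) :=
    hA.contDiffAt (hU2open.mem_nhds (Set.mem_prod.2 ⟨hp, ht⟩))
  have hA1 : ContDiffAt ℝ 1 (fderiv ℝ A) ((p, t) : ℝ × ℝ) :=
    hAq.fderiv_right (by norm_num)
  have hd1A : DifferentiableAt ℝ (fun z : ℝ × ℝ => fderiv ℝ A z ((1:ℝ), (0:ℝ))) ((p, t) : ℝ × ℝ) :=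
    (hA1.differentiableAt (by norm_num)).clm_apply (differentiableAt_const _)
  have hp1L : DifferentiableAt ℝ
      (fun r : ℝ × ℝ × ℝ => fderiv ℝ A (r.1, r.2.2) ((1:ℝ), (0:ℝ))) ((p, y, t) : ℝ × ℝ × ℝ) := by
    have h := hd1A.comp ((p, y, t) : ℝ × ℝ × ℝ) L.differentiableAt
    exact h
  have hp1Lfd : ∀ v : ℝ × ℝ × ℝ,
      fderiv ℝ (fun r : ℝ × ℝ × ℝ => fderiv ℝ A (r.1, r.2.2) ((1:ℝ), (0:ℝ)))
        ((p, y, t) : ℝ × ℝ × ℝ) v =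
      fderiv ℝ (fun z : ℝ × ℝ => fderiv ℝ A z ((1:ℝ), (0:ℝ))) ((p, t) : ℝ × ℝ) (L v) := by
    intro v
    have h := hd1A.hasFDerivAt.comp ((p, y, t) : ℝ × ℝ × ℝ) L.hasFDerivAt
    have h2 : HasFDerivAt (fun r : ℝ × ℝ × ℝ => fderiv ℝ A (r.1, r.2.2) ((1:ℝ), (0:ℝ)))
        ((fderiv ℝ (fun z : ℝ × ℝ => fderiv ℝ A z ((1:ℝ), (0:ℝ))) ((p, t) : ℝ × ℝ)).comp L)
        ((p, y, t) : ℝ × ℝ × ℝ) := by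
      exact h
    rw [h2.fderiv]; rfl
  have hpartdiff : DifferentiableAt ℝ
      (fun r : ℝ × ℝ × ℝ => -(r.2.1 ^ 2) / (4 * r.2.2) + c * r.2.1 / r.2.2)
      ((p, y, t) : ℝ × ℝ × ℝ) := by
    exact (((hdyq.pow 2).neg).mul ((hdtq.const_mul 4).inv (by exact h4t))).add
      ((hdyq.const_mul c).mul (hdtq.inv (by exact ht')))
  have hfdx : fderiv ℝ (px G) ((p, y, t) : ℝ × ℝ × ℝ) =
      fderiv ℝ (fun r : ℝ × ℝ × ℝ => fderiv ℝ A (r.1, r.2.2) ((1:ℝ), (0:ℝ))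
        + (-(r.2.1 ^ 2) / (4 * r.2.2) + c * r.2.1 / r.2.2)) ((p, y, t) : ℝ × ℝ × ℝ) :=
    hEqx.fderiv_eq
  -- G_{pp}
  have hpxx : px (px G) (p, y, t) =
      fderiv ℝ (fun z : ℝ × ℝ => fderiv ℝ A z ((1:ℝ), (0:ℝ))) ((p, t) : ℝ × ℝ) ((1:ℝ), (0:ℝ)) := by
    show fderiv ℝ (px G) ((p, y, t) : ℝ × ℝ × ℝ) (1, 0, 0) = _
    rw [hfdx, fderiv_fun_add hp1L hpartdiff, ContinuousLinearMap.add_apply, hp1Lfd,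
      fderiv_line _ _ _ hpartdiff]
    have hL1 : L ((1:ℝ), (0:ℝ), (0:ℝ)) = ((1:ℝ), (0:ℝ)) := rfl
    rw [hL1]
    have hfun : (fun s : ℝ =>
        (fun r : ℝ × ℝ × ℝ => -(r.2.1 ^ 2) / (4 * r.2.2) + c * r.2.1 / r.2.2)
          (((p, y, t) : ℝ × ℝ × ℝ) + s • ((1:ℝ), (0:ℝ), (0:ℝ)))) =
        fun _ : ℝ => -(y ^ 2) / (4 * t) + c * y / t := by
      funext s
      simp [Prod.mk_add_mk, Prod.smul_mk, smul_eq_mul]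
    rw [hfun, deriv_const]
    ring
  -- G_{pt}
  have hptx : pt (px G) (p, y, t) =
      fderiv ℝ (fun z : ℝ × ℝ => fderiv ℝ A z ((1:ℝ), (0:ℝ))) ((p, t) : ℝ × ℝ) ((0:ℝ), (1:ℝ))
        + (y ^ 2 / (4 * t ^ 2) - c * y / t ^ 2) := by
    show fderiv ℝ (px G) ((p, y, t) : ℝ × ℝ × ℝ) (0, 0, 1) = _
    rw [hfdx, fderiv_fun_add hp1L hpartdiff, ContinuousLinearMap.add_apply, hp1Lfd,
      fderiv_line _ _ _ hpartdiff]
    have hL3 : L ((0:ℝ), (0:ℝ), (1:ℝ)) = ((0:ℝ), (1:ℝ)) := rfl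
    rw [hL3]
    have hfun : (fun s : ℝ =>
        (fun r : ℝ × ℝ × ℝ => -(r.2.1 ^ 2) / (4 * r.2.2) + c * r.2.1 / r.2.2)
          (((p, y, t) : ℝ × ℝ × ℝ) + s • ((0:ℝ), (0:ℝ), (1:ℝ)))) =
        fun s : ℝ => -(y ^ 2) / (4 * (t + s)) + c * y / (t + s) := by
      funext s
      simp [Prod.mk_add_mk, Prod.smul_mk, smul_eq_mul]
    rw [hfun]
    have hb : HasDerivAt (fun s : ℝ => t + s) 1 0 := by
      simpa using (hasDerivAt_id (0:ℝ)).const_add t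
    have hden : HasDerivAt (fun s : ℝ => 4 * (t + s)) (4 * 1) 0 := hb.const_mul 4
    have hne1 : (fun s : ℝ => 4 * (t + s)) 0 ≠ 0 := by simpa using h4t
    have hne2 : (fun s : ℝ => t + s) 0 ≠ 0 := by simpa using ht'
    have h1 := (hasDerivAt_const (0:ℝ) (-(y ^ 2))).div hden hne1
    have h2 := (hasDerivAt_const (0:ℝ) (c * y)).div hb hne2
    rw [HasDerivAt.deriv (f := fun s : ℝ => -(y ^ 2) / (4 * (t + s)) + c * y / (t + s)) (h1.add h2)]
    field_simp
    ring
  -- conclude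
  have key := heq p hp t ht
  simp only [p1, p2, pd2] at key
  rw [show pd2 ((1:ℝ), (0:ℝ)) A = fun z : ℝ × ℝ => fderiv ℝ A z ((1:ℝ), (0:ℝ)) from rfl] at key
  rw [hpxy, hpyy, hpxx, hptx]
  field_simp
  set App := fderiv ℝ (fun z : ℝ × ℝ => fderiv ℝ A z ((1:ℝ), (0:ℝ))) ((p, t) : ℝ × ℝ) ((1:ℝ), (0:ℝ)) with hApp
  set Apt := fderiv ℝ (fun z : ℝ × ℝ => fderiv ℝ A z ((1:ℝ), (0:ℝ))) ((p, t) : ℝ × ℝ) ((0:ℝ), (1:ℝ)) with hApt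
  linear_combination 8 * key
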